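/- Let n ≥ 1 and let S ⊆ ZMod n be nonempty with 0 ∉ S, and suppose the translation subgroup T̂ is normal in Aut(Cay(ZMod n, S)). If Cay(ZMod n, S) is R-thick, then Cay(ZMod n, S) is isomorphic to C₄. -/

import Mathlib

/-- A permutation `e` is an automorphism of the digraph with adjacency `Adj`. -/
def IsDigraphAut {V : Type*} (Adj : V → V → Prop) (e : Equiv.Perm V) : Prop :=
  ∀ x y, Adj x y ↔ Adj (e x) (e y)

/-- The automorphism group of a digraph, as a subgroup of the permutation group. -/
def autGroup {V : Type*} (Adj : V → V → Prop) : Subgroup (Equiv.Perm V) where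
  carrier := {e | IsDigraphAut Adj e}
  one_mem' := by intro x y; exact Iff.rfl
  mul_mem' := by
    intro a b ha hb x y
    exact (hb x y).trans (ha (b x) (b y))
  inv_mem' := by
    intro a ha x y
    simpa using (ha (a⁻¹ x) (a⁻¹ y)).symm

/-- A digraph is arc-transitive if its automorphism group is transitive on arcs. -/
def ArcTransitive {V : Type*} (Adj : V → V → Prop) : Prop :=
  ∀ x y u v, Adj x y → Adj u v → ∃ e ∈ autGroup Adj, e x = u ∧ e y = v

/-- A subgroup of the permutation group of `V` is regular on `V`. -/
def IsRegularSub {V : Type*} (H : Subgroup (Equiv.Perm V)) : Prop :=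
  ∀ u v : V, ∃! h : H, (h : Equiv.Perm V) u = v

/-- A circulant: the automorphism group contains a regular cyclic subgroup. -/
def IsCirculant {V : Type*} (Adj : V → V → Prop) : Prop :=
  ∃ H : Subgroup (Equiv.Perm V), H ≤ autGroup Adj ∧ IsCyclic H ∧ IsRegularSub H

/-- A normal circulant: the automorphism group contains a regular cyclic subgroup
that is normal in the automorphism group. -/
def IsNormalCirculant {V : Type*} (Adj : V → V → Prop) : Prop :=
  ∃ H : Subgroup (Equiv.Perm V), H ≤ autGroup Adj ∧ IsCyclic H ∧ IsRegularSub H ∧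
    ∀ e ∈ autGroup Adj, ∀ h ∈ H, e * h * e⁻¹ ∈ H

/-- Tensor (direct) product of digraphs. -/
def tensorAdj {V₁ V₂ : Type*} (Adj₁ : V₁ → V₁ → Prop) (Adj₂ : V₂ → V₂ → Prop) :
    V₁ × V₂ → V₁ × V₂ → Prop :=
  fun p q => Adj₁ p.1 q.1 ∧ Adj₂ p.2 q.2

/-- Lexicographic product `Γ[Kbar_b]` with the edgeless digraph on `b` vertices. -/
def lexAdj {V : Type*} (Adj : V → V → Prop) (b : ℕ) : V × Fin b → V × Fin b → Prop :=
  fun p q => Adj p.1 q.1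

/-- Digraph isomorphism. -/
def DigraphIso {V₁ V₂ : Type*} (Adj₁ : V₁ → V₁ → Prop) (Adj₂ : V₂ → V₂ → Prop) : Prop :=
  ∃ e : V₁ ≃ V₂, ∀ x y, Adj₁ x y ↔ Adj₂ (e x) (e y)

/-- Connectedness: the reflexive–symmetric–transitive closure of adjacency
relates every pair of vertices. -/
def DigraphConnected {V : Type*} (Adj : V → V → Prop) : Prop :=
  ∀ u v : V, Relation.ReflTransGen (fun a b => Adj a b ∨ Adj b a) u v

/-- R-thick digraph: two distinct vertices with the same in- and out-neighbourhoods. -/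
def RThick {V : Type*} (Adj : V → V → Prop) : Prop :=
  ∃ u v : V, u ≠ v ∧ (∀ w, Adj u w ↔ Adj v w) ∧ (∀ w, Adj w u ↔ Adj w v)

/-- The directed 4-cycle on `ZMod 4`. -/
def C4Adj : ZMod 4 → ZMod 4 → Prop := fun x y => y - x = 1 ∨ y - x = 3

/-- Cayley digraph of a group `G` with connection set `S`. -/
def cayAdj (G : Type*) [Group G] (S : Set G) : G → G → Prop :=
  fun x y => y * x⁻¹ ∈ S

/-- The right-regular representation of `G` inside `Equiv.Perm G`. -/
def rightReg (G : Type*) [Group G] : Subgroup (Equiv.Perm G) where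
  carrier := {e | ∃ g : G, ∀ x, e x = x * g}
  one_mem' := ⟨1, by simp⟩
  mul_mem' := by
    rintro a b ⟨g, hg⟩ ⟨h, hh⟩
    exact ⟨h * g, fun x => by simp [Equiv.Perm.mul_apply, hh, hg, mul_assoc]⟩
  inv_mem' := by
    rintro a ⟨g, hg⟩
    refine ⟨g⁻¹, fun x => a.injective ?_⟩
    rw [Equiv.Perm.coe_inv, Equiv.apply_symm_apply, hg]
    simp

/-- Cayley digraph of `ZMod n` with connection set `S`. -/
def zcayAdj (n : ℕ) (S : Set (ZMod n)) : ZMod n → ZMod n → Prop :=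
  fun x y => y - x ∈ S

/-- The translation subgroup of `Equiv.Perm (ZMod n)`. -/
def transSub (n : ℕ) : Subgroup (Equiv.Perm (ZMod n)) where
  carrier := {e | ∃ g : ZMod n, ∀ x, e x = x + g}
  one_mem' := ⟨0, by simp⟩
  mul_mem' := by
    rintro a b ⟨g, hg⟩ ⟨h, hh⟩
    exact ⟨h + g, fun x => by simp [Equiv.Perm.mul_apply, hh, hg, add_assoc]⟩
  inv_mem' := by
    rintro a ⟨g, hg⟩
    refine ⟨-g, fun x => a.injective ?_⟩
    rw [Equiv.Perm.coe_inv, Equiv.apply_symm_apply, hg]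
    simp

theorem no_period {n : ℕ} [NeZero n] {S : Set (ZMod n)} (h0 : (0:ZMod n) ∉ S)
    (hne : S.Nonempty) {g : ZMod n} (hg : IsUnit g)
    (key : ∀ s, s ∈ S → s + g ∈ S) : False := by
  obtain ⟨s₀, hs₀⟩ := hne
  have hm : ∀ m : ℕ, s₀ + m • g ∈ S := by
    intro m
    induction m with
    | zero => simpa using hs₀
    | succ k ih =>
      have := key _ ih
      rw [succ_nsmul, ← add_assoc]
      exact this
  have hex : ∃ m : ℕ, (m : ZMod n) * g = -s₀ := by
    refine ⟨(-s₀ * ↑hg.unit⁻¹).val, ?_⟩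
    rw [ZMod.natCast_val, ZMod.cast_id]
    rw [mul_assoc, IsUnit.val_inv_mul, mul_one]
  obtain ⟨m, hmeq⟩ := hex
  have := hm m
  rw [nsmul_eq_mul, hmeq, add_neg_cancel] at this
  exact h0 this

theorem stmt14_aux (n : ℕ) (hn : 1 ≤ n) (S : Set (ZMod n)) (hne : S.Nonempty)
    (h0 : (0 : ZMod n) ∉ S)
    (hnorm : ∀ e, (∀ x y, zcayAdj n S x y ↔ zcayAdj n S (e x) (e y)) →
      ∀ h : Equiv.Perm (ZMod n), (∃ g : ZMod n, ∀ x, h x = x + g) →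
        ∃ k : ZMod n, ∀ x, (e * h * e⁻¹) x = x + k)
    (u v : ZMod n) (huvne : u ≠ v)
    (hout : ∀ w, zcayAdj n S u w ↔ zcayAdj n S v w)
    (hin : ∀ w, zcayAdj n S w u ↔ zcayAdj n S w v) :
    ∃ e : ZMod n ≃ ZMod 4, ∀ x y, zcayAdj n S x y ↔ (e y - e x = 1 ∨ e y - e x = 3) := by
  have key : ∀ s : ZMod n, s ∈ S ↔ s + (u - v) ∈ S := by
    intro s
    have h := hout (s + u)
    simp only [zcayAdj, add_sub_cancel_right] at h
    rwa [add_sub_assoc] at h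
  -- the swap automorphism
  have hloop : ∀ x, ¬ zcayAdj n S x x := by
    intro x h; simp only [zcayAdj, sub_self] at h; exact h0 h
  have huv : ¬ zcayAdj n S u v := fun h => hloop v ((hout v).mp h)
  have hvu : ¬ zcayAdj n S v u := fun h => hloop u ((hout u).mpr h)
  have hτ : ∀ x y, zcayAdj n S x y ↔ zcayAdj n S (Equiv.swap u v x) (Equiv.swap u v y) := by
    intro x y
    rcases eq_or_ne x u with hxu | hxu
    · rw [hxu, Equiv.swap_apply_left]
      rcases eq_or_ne y u with hyu | hyu
      · rw [hyu, Equiv.swap_apply_left]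
        exact iff_of_false (hloop u) (hloop v)
      · rcases eq_or_ne y v with hyv | hyv
        · rw [hyv, Equiv.swap_apply_right]
          exact iff_of_false huv hvu
        · rw [Equiv.swap_apply_of_ne_of_ne hyu hyv]
          exact hout y
    · rcases eq_or_ne x v with hxv | hxv
      · rw [hxv, Equiv.swap_apply_right]
        rcases eq_or_ne y u with hyu | hyu
        · rw [hyu, Equiv.swap_apply_left]
          exact iff_of_false hvu huv
        · rcases eq_or_ne y v with hyv | hyv
          · rw [hyv, Equiv.swap_apply_right]
            exact iff_of_false (hloop v) (hloop u)
          · rw [Equiv.swap_apply_of_ne_of_ne hyu hyv]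
            exact (hout y).symm
      · rw [Equiv.swap_apply_of_ne_of_ne hxu hxv]
        rcases eq_or_ne y u with hyu | hyu
        · rw [hyu, Equiv.swap_apply_left]
          exact hin x
        · rcases eq_or_ne y v with hyv | hyv
          · rw [hyv, Equiv.swap_apply_right]
            exact (hin x).symm
          · rw [Equiv.swap_apply_of_ne_of_ne hyu hyv]
  -- n ≤ 4
  have hn4 : n ≤ 4 := by
    by_contra hlt
    push_neg at hlt
    haveI : NeZero n := ⟨by omega⟩
    obtain ⟨k, hk⟩ := hnorm (Equiv.swap u v) hτ (Equiv.addRight (1 : ZMod n)) ⟨1, fun x => rfl⟩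
    have hk' : ∀ x, Equiv.swap u v (Equiv.swap u v x + 1) = x + k := by
      intro x
      have h := hk x
      simpa [Equiv.Perm.mul_apply, Equiv.swap_inv] using h
    -- generic point
    have hbad : ∃ x : ZMod n, x ≠ u ∧ x ≠ v ∧ x + 1 ≠ u ∧ x + 1 ≠ v := by
      by_contra hc
      push_neg at hc
      have hsub : (Finset.univ : Finset (ZMod n)) ⊆ {u, v, u - 1, v - 1} := by
        intro x _
        simp only [Finset.mem_insert, Finset.mem_singleton]
        rcases eq_or_ne x u with h | h; · exact Or.inl h
        rcases eq_or_ne x v with h' | h'; · exact Or.inr (Or.inl h')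
        rcases eq_or_ne (x + 1) u with h'' | h''
        · exact Or.inr (Or.inr (Or.inl (by rw [← h'']; ring)))
        · have := hc x h h' h''
          exact Or.inr (Or.inr (Or.inr (by rw [← this]; ring)))
      have hcard := Finset.card_le_card hsub
      rw [Finset.card_univ, ZMod.card] at hcard
      have h4 : ({u, v, u - 1, v - 1} : Finset (ZMod n)).card ≤ 4 := by
        refine le_trans (Finset.card_insert_le _ _) ?_
        refine le_trans (Nat.add_le_add_right (Finset.card_insert_le _ _) 1) ?_
        refine le_trans (Nat.add_le_add_right (Nat.add_le_add_right (Finset.card_insert_le _ _) 1) 1) ?_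
        simp
      omega
    obtain ⟨x₀, hx₀u, hx₀v, hx₀u1, hx₀v1⟩ := hbad
    have hkeq : k = 1 := by
      have h := hk' x₀
      rw [Equiv.swap_apply_of_ne_of_ne hx₀u hx₀v,
        Equiv.swap_apply_of_ne_of_ne hx₀u1 hx₀v1] at h
      exact (add_left_cancel h).symm
    have hu := hk' u
    rw [Equiv.swap_apply_left, hkeq] at hu
    -- hu : swap u v (v + 1) = u + 1
    rcases eq_or_ne (v + 1) u with h | h
    · rw [h, Equiv.swap_apply_left] at hu
      -- hu : v = u + 1 and h : v + 1 = u, so u = u + 2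
      have e1 : u = u + 2 := by
        conv_lhs => rw [← h, hu]
        ring
      have h2 : (0 : ZMod n) = 2 := by
        refine add_left_cancel (a := u) ?_
        rw [add_zero]; exact e1
      have hc2 : ((2 : ℕ) : ZMod n) = 0 := by push_cast; exact h2.symm
      rw [ZMod.natCast_eq_zero_iff] at hc2
      have := Nat.le_of_dvd (by norm_num) hc2
      omega
    · rcases eq_or_ne (v + 1) v with h' | h'
      · have h1 : (1 : ZMod n) = 0 := by
          refine add_left_cancel (a := v) ?_
          rw [add_zero]; exact h'
        have hc1 : ((1 : ℕ) : ZMod n) = 0 := by push_cast; exact h1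
        rw [ZMod.natCast_eq_zero_iff] at hc1
        have := Nat.le_of_dvd (by norm_num) hc1
        omega
      · rw [Equiv.swap_apply_of_ne_of_ne h h'] at hu
        exact huvne (add_right_cancel hu).symm
  have hg : u - v ≠ 0 := sub_ne_zero.mpr huvne
  interval_cases n
  · exact absurd (Subsingleton.elim u v) huvne
  · haveI : Fact (Nat.Prime 2) := ⟨by norm_num⟩
    exact (no_period h0 hne hg.isUnit (fun s hs => (key s).mp hs)).elim
  · haveI : Fact (Nat.Prime 3) := ⟨by norm_num⟩
    exact (no_period h0 hne hg.isUnit (fun s hs => (key s).mp hs)).elim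
  · have trich : u - v = 1 ∨ u - v = 2 ∨ u - v = 3 := by
      have h := hg
      revert h
      have : ∀ g : ZMod 4, g ≠ 0 → g = 1 ∨ g = 2 ∨ g = 3 := by decide
      exact this (u - v)
    rcases trich with h1 | h2 | h3
    · exfalso
      refine no_period h0 hne isUnit_one (fun s hs => ?_)
      have := (key s).mp hs
      rwa [h1] at this
    · -- S = {1, 3}
      have key2 : ∀ s : ZMod 4, s ∈ S ↔ s + 2 ∈ S := by
        intro s; have := key s; rwa [h2] at this
      have hS2 : (2 : ZMod 4) ∉ S := by
        intro hh
        have := (key2 2).mp hh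
        norm_num at this
        exact h0 this
      have h13 : (1 : ZMod 4) ∈ S ↔ (3 : ZMod 4) ∈ S := by
        have := key2 1
        norm_num at this
        exact this
      obtain ⟨s₀, hs₀⟩ := hne
      have hs13 : s₀ = 1 ∨ s₀ = 3 := by
        have hd : ∀ s : ZMod 4, s ≠ 0 → s ≠ 2 → s = 1 ∨ s = 3 := by decide
        exact hd s₀ (fun h => h0 (h ▸ hs₀)) (fun h => hS2 (h ▸ hs₀))
      have h1S : (1 : ZMod 4) ∈ S ∧ (3 : ZMod 4) ∈ S := by
        rcases hs13 with h | h
        · exact ⟨h ▸ hs₀, h13.mp (h ▸ hs₀)⟩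
        · exact ⟨h13.mpr (h ▸ hs₀), h ▸ hs₀⟩
      have hSset : S = {1, 3} := by
        ext x
        simp only [Set.mem_insert_iff, Set.mem_singleton_iff]
        constructor
        · intro hx
          have hd : ∀ s : ZMod 4, s ≠ 0 → s ≠ 2 → s = 1 ∨ s = 3 := by decide
          exact hd x (fun h => h0 (h ▸ hx)) (fun h => hS2 (h ▸ hx))
        · rintro (rfl | rfl)
          · exact h1S.1
          · exact h1S.2
      refine ⟨Equiv.refl _, fun x y => ?_⟩
      simp only [zcayAdj, hSset, Equiv.refl_apply, Set.mem_insert_iff, Set.mem_singleton_iff]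
    · exfalso
      refine no_period h0 hne ((isUnit_iff_exists_inv (a := (3 : ZMod 4))).mpr ⟨3, by decide⟩) (fun s hs => ?_)
      have := (key s).mp hs
      rwa [h3] at this

theorem stmt14 (n : ℕ) (hn : 1 ≤ n) (S : Set (ZMod n)) (hne : S.Nonempty)
    (h0 : (0 : ZMod n) ∉ S)
    (hnorm : ∀ e ∈ autGroup (zcayAdj n S), ∀ h ∈ transSub n, e * h * e⁻¹ ∈ transSub n)
    (hthick : RThick (zcayAdj n S)) :
    DigraphIso (zcayAdj n S) C4Adj := by
  obtain ⟨u, v, huvne, hout, hin⟩ := hthick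
  obtain ⟨e, he⟩ := stmt14_aux n hn S hne h0
    (fun e he h hh => hnorm e he h hh) u v huvne hout hin
  exact ⟨e, he⟩
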